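/- Let n ≥ 1 and let f ∈ ℂ[[z_1,…,z_n]] be a formal power series of order m ≥ 2 in which the monomial z_1^m occurs with nonzero coefficient. Let φ_1,…,φ_n ∈ ℂ[[t]] have zero constant term with f(φ_1,…,φ_n) = 0, and let ψ_1 ∈ ℂ[[t]] be nonzero with zero constant term, of order d. Define F(t,s) := f(φ_1(t) + s·t^{d+1}, φ_2(t), …, φ_n(t)) ∈ ℂ[[t,s]]. Then F is not identically zero, F is divisible by t^{d+1}, F(t,0) = 0, and there exists Ψ_2 ∈ ℂ[[t,s]] divisible by t with Ψ_2(t,0) = 0 such that ψ_1(t)·Ψ_2(t,s) = F(t,s). -/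

import Mathlib

/-- `ℂ[[t,s]]`, viewed as power series in `t` whose coefficients are
power series in `s`. -/
abbrev CTS : Type := PowerSeries (PowerSeries ℂ)

/-- Substitution of power series `g j ∈ S[[t]]` (each of which is assumed,
for this definition to be the true substitution, to have zero constant
term in `t`) into `f ∈ ℂ[[z_0,…,z_n]]`, defined coefficientwise:
the coefficient of `t^k` in `f(g)` is the (finite) sum, over the
multi-exponents `d` with `d j ≤ k` for all `j`, of
`(coeff d f) • coeff_k (∏ j, (g j)^(d j))`.  (Exponents `d` of total degree
`> k` contribute `0` since each `g j` is divisible by `t`.) -/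
noncomputable def substArc {n : ℕ} {S : Type} [CommRing S] [Algebra ℂ S]
    (g : Fin (n + 1) → PowerSeries S) (f : MvPowerSeries (Fin (n + 1)) ℂ) :
    PowerSeries S :=
  PowerSeries.mk fun k =>
    ∑ d ∈ Finset.Iic (Finsupp.equivFunOnFinite.symm fun _ : Fin (n + 1) => k),
      MvPowerSeries.coeff d f • PowerSeries.coeff k (∏ j, g j ^ d j)

/-- The image of `φ(t) ∈ ℂ[[t]]` in `ℂ[[t,s]]`. -/
noncomputable def embT (φ : PowerSeries ℂ) : CTS :=
  PowerSeries.map (PowerSeries.C) φ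

/-- The variable `s` as an element of `ℂ[[t,s]]`. -/
noncomputable def sVar : CTS := PowerSeries.C PowerSeries.X

/-- The substitution `F(t,s) = f(φ_0(t) + w, φ_1(t), …, φ_n(t)) ∈ ℂ[[t,s]]`,
where `w ∈ ℂ[[t,s]]` is the perturbation added to the first coordinate. -/
noncomputable def deformSubst {n : ℕ} (φ : Fin (n + 1) → PowerSeries ℂ)
    (w : CTS) (f : MvPowerSeries (Fin (n + 1)) ℂ) : CTS :=
  substArc (fun j => if j = 0 then embT (φ 0) + w else embT (φ j)) f

lemma substArc_mapRH {n : ℕ} {S S' : Type} [CommRing S] [CommRing S']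
    [Algebra ℂ S] [Algebra ℂ S'] (ρ : S →+* S')
    (hρ : ∀ (c : ℂ) (x : S), ρ (c • x) = c • ρ x)
    (g : Fin (n + 1) → PowerSeries S) (f : MvPowerSeries (Fin (n + 1)) ℂ) :
    PowerSeries.map ρ (substArc g f)
      = substArc (fun j => PowerSeries.map ρ (g j)) f := by
  ext k
  simp only [substArc, PowerSeries.coeff_map, PowerSeries.coeff_mk, map_sum]
  refine Finset.sum_congr rfl fun e _ => ?_
  rw [hρ]
  congr 1
  rw [← PowerSeries.coeff_map, map_prod]
  refine congrArg _ (Finset.prod_congr rfl fun j _ => ?_)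
  rw [map_pow]

lemma C_smul (c : ℂ) (x : ℂ) :
    PowerSeries.C (c • x) = c • PowerSeries.C x := by
  ext k
  simp [PowerSeries.coeff_C, PowerSeries.coeff_smul, smul_eq_mul]

lemma embT_substArc {n : ℕ} (φ : Fin (n + 1) → PowerSeries ℂ)
    (f : MvPowerSeries (Fin (n + 1)) ℂ) :
    substArc (fun j => embT (φ j)) f = embT (substArc φ f) := by
  rw [embT]
  exact (substArc_mapRH (S := ℂ) (S' := PowerSeries ℂ) (PowerSeries.C (R := ℂ)) C_smul φ f).symm

lemma resT_substArc {n : ℕ} (g : Fin (n + 1) → CTS)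
    (f : MvPowerSeries (Fin (n + 1)) ℂ) :
    PowerSeries.map (PowerSeries.constantCoeff) (substArc g f)
      = substArc (fun j => PowerSeries.map (PowerSeries.constantCoeff) (g j)) f := by
  refine substArc_mapRH _ (fun c x => ?_) g f
  rw [← PowerSeries.coeff_zero_eq_constantCoeff_apply,
    ← PowerSeries.coeff_zero_eq_constantCoeff_apply, PowerSeries.coeff_smul]

lemma resT_embT (ψ : PowerSeries ℂ) :
    PowerSeries.map (PowerSeries.constantCoeff) (embT ψ) = ψ := by
  rw [embT]
  have h1 : (PowerSeries.map (PowerSeries.constantCoeff))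
      ((PowerSeries.map (PowerSeries.C)) ψ)
      = PowerSeries.map ((PowerSeries.constantCoeff).comp (PowerSeries.C)) ψ := by
    rw [PowerSeries.map_comp]; rfl
  have h2 : (PowerSeries.constantCoeff).comp (PowerSeries.C) = RingHom.id ℂ := by
    ext a; simp
  rw [h1, h2, PowerSeries.map_id]; rfl

lemma Tcalc {n : ℕ} (φ : Fin (n+1) → PowerSeries ℂ)
    (hφ : ∀ j, PowerSeries.constantCoeff (φ j) = 0) (d m : ℕ) (hm : 1 ≤ m)
    (e : Fin (n+1) →₀ ℕ) :
    PowerSeries.coeff m (PowerSeries.coeff (m*(d+1))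
      (∏ j, (if j = 0 then embT (φ 0) + sVar * PowerSeries.X^(d+1) else embT (φ j)) ^ e j))
      = if e = Finsupp.single 0 m then 1 else 0 := by
  set w : CTS := sVar * PowerSeries.X^(d+1) with hw
  set k := m*(d+1) with hk
  set N := e 0 with hN
  set Q : PowerSeries ℂ := ∏ j : Fin n, φ j.succ ^ e j.succ with hQ
  have hprod : (∏ j, (if j = 0 then embT (φ 0) + w else embT (φ j)) ^ e j)
      = (w + embT (φ 0)) ^ N * embT Q := by
    have hkey : embT Q = ∏ j : Fin n, embT (φ j.succ) ^ e j.succ := by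
      rw [hQ, embT, map_prod]
      exact Finset.prod_congr rfl fun j _ => by rw [embT, map_pow]
    rw [Fin.prod_univ_succ, if_pos rfl, add_comm (embT (φ 0)) w, hkey]
    exact congrArg _ (Finset.prod_congr rfl fun j _ => by rw [if_neg (Fin.succ_ne_zero j)])
  rw [hprod, add_pow, Finset.sum_mul, map_sum, map_sum]
  have hterm : ∀ i ∈ Finset.range (N+1),
      PowerSeries.coeff m (PowerSeries.coeff k
        (w ^ i * embT (φ 0) ^ (N - i) * ((N.choose i : ℕ) : CTS) * embT Q))
      = if i = m then (N.choose m : ℂ)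
          * PowerSeries.constantCoeff (φ 0 ^ (N-m) * Q) else 0 := by
    intro i hi
    have hwpow : w ^ i = PowerSeries.C (PowerSeries.X ^ i)
        * PowerSeries.X ^ ((d+1)*i) := by
      rw [hw, sVar, mul_pow, ← map_pow, ← pow_mul, mul_comm (d+1) i]
    have hmulQ : embT (φ 0 ^ (N-i) * Q) = embT (φ 0) ^ (N - i) * embT Q := by
      rw [embT, map_mul, map_pow]; rfl
    have hre : w ^ i * embT (φ 0) ^ (N - i) * ((N.choose i : ℕ) : CTS) * embT Q
        = (N.choose i) • (PowerSeries.C (PowerSeries.X ^ i)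
            * (embT (φ 0 ^ (N-i) * Q) * PowerSeries.X ^ ((d+1)*i))) := by
      rw [nsmul_eq_mul, hwpow, hmulQ]
      ring
    rw [hre, map_nsmul, map_nsmul, PowerSeries.coeff_C_mul,
      PowerSeries.coeff_mul_X_pow', embT, PowerSeries.coeff_map]
    by_cases him : i = m
    · subst him
      have hle : (d+1)*i ≤ k := le_of_eq (mul_comm _ _)
      rw [if_pos hle]
      have h0 : k - (d+1)*i = 0 := by simp [hk, mul_comm]
      rw [h0, PowerSeries.coeff_zero_eq_constantCoeff_apply, if_pos rfl,
        mul_comm (PowerSeries.X ^ i : PowerSeries ℂ), PowerSeries.coeff_C_mul,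
        PowerSeries.coeff_X_pow, if_pos rfl, mul_one, nsmul_eq_mul]
    · rw [if_neg him]
      split_ifs with h1
      · rw [mul_comm (PowerSeries.X ^ i : PowerSeries ℂ), PowerSeries.coeff_C_mul,
          PowerSeries.coeff_X_pow, if_neg (Ne.symm him), mul_zero, smul_zero]
      · rw [mul_zero, map_zero, smul_zero]
  rw [Finset.sum_congr rfl hterm, Finset.sum_ite_eq' (Finset.range (N+1)) m]
  have hcQ : PowerSeries.constantCoeff Q
      = ∏ j : Fin n, (PowerSeries.constantCoeff (φ j.succ)) ^ e j.succ := by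
    rw [hQ, map_prod]
    exact Finset.prod_congr rfl fun j _ => by rw [map_pow]
  by_cases hes : e = Finsupp.single 0 m
  · have hNm : N = m := by rw [hN, hes, Finsupp.single_eq_same]
    have hQ1 : Q = 1 := by
      rw [hQ]
      refine Finset.prod_eq_one fun j _ => ?_
      rw [hes, Finsupp.single_eq_of_ne (Fin.succ_ne_zero j), pow_zero]
    rw [if_pos hes, if_pos (by simp [hNm]), hNm, Nat.sub_self, pow_zero, one_mul, hQ1,
      Nat.choose_self, map_one, Nat.cast_one, one_mul]
  · rw [if_neg hes]
    split_ifs with hmem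
    · have hmN : m ≤ N := by simpa using Nat.lt_succ_iff.mp (Finset.mem_range.mp hmem)
      have hc0 : PowerSeries.constantCoeff (φ 0 ^ (N-m) * Q) = 0 := by
        rw [map_mul, map_pow, hφ 0, hcQ]
        by_cases hNm : N = m
        · have : ∃ j : Fin n, e j.succ ≠ 0 := by
            by_contra hall
            push_neg at hall
            apply hes
            ext x
            refine Fin.cases ?_ (fun j => ?_) x
            · rw [← hN, hNm, Finsupp.single_eq_same]
            · rw [hall j, Finsupp.single_eq_of_ne (Fin.succ_ne_zero j)]
          obtain ⟨j₀, hj₀⟩ := this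
          rw [Finset.prod_eq_zero (Finset.mem_univ j₀) (by rw [hφ]; exact zero_pow hj₀),
            mul_zero]
        · rw [zero_pow (by omega), zero_mul]
      rw [hc0, mul_zero]
    · rfl


/-- Deformation step in the proof of Theorem 1, case `f(φ) = 0`.
Let `f ∈ ℂ[[z_0,…,z_n]]` have order `m ≥ 2` with `z_0^m` occurring with
nonzero coefficient; let `φ_j ∈ ℂ[[t]]` have zero constant term with
`f(φ) = 0`, and let `ψ_1 ∈ ℂ[[t]]` be nonzero of zero constant term and
order `d`.  Set `F(t,s) := f(φ_0(t) + s·t^(d+1), φ_1(t), …, φ_n(t))`.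
Then `F ≠ 0`, `t^(d+1) ∣ F`, `F(t,0) = 0`, and `F = ψ_1·Ψ_2` for some
`Ψ_2 ∈ ℂ[[t,s]]` divisible by `t` with `Ψ_2(t,0) = 0`. -/
theorem stmt6 (n : ℕ) (f : MvPowerSeries (Fin (n + 1)) ℂ) (m : ℕ) (hm : 2 ≤ m)
    (hord : ∀ d : Fin (n + 1) →₀ ℕ,
      (d.sum fun _ e => e) < m → MvPowerSeries.coeff d f = 0)
    (hz : MvPowerSeries.coeff (Finsupp.single 0 m) f ≠ 0)
    (φ : Fin (n + 1) → PowerSeries ℂ)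
    (hφ : ∀ j, PowerSeries.constantCoeff (φ j) = 0)
    (hfφ : substArc φ f = 0)
    (ψ₁ : PowerSeries ℂ) (hψne : ψ₁ ≠ 0)
    (hψ0 : PowerSeries.constantCoeff ψ₁ = 0)
    (d : ℕ) (hd : ψ₁.order = d) :
    deformSubst φ (sVar * PowerSeries.X ^ (d + 1)) f ≠ 0 ∧
    (PowerSeries.X : CTS) ^ (d + 1) ∣ deformSubst φ (sVar * PowerSeries.X ^ (d + 1)) f ∧
    PowerSeries.map (PowerSeries.constantCoeff)
      (deformSubst φ (sVar * PowerSeries.X ^ (d + 1)) f) = 0 ∧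
    ∃ Ψ₂ : CTS, (PowerSeries.X : CTS) ∣ Ψ₂ ∧
      PowerSeries.map (PowerSeries.constantCoeff) Ψ₂ = 0 ∧
      embT ψ₁ * Ψ₂ = deformSubst φ (sVar * PowerSeries.X ^ (d + 1)) f := by
  classical
  set w : CTS := sVar * PowerSeries.X ^ (d + 1) with hw
  set g : Fin (n+1) → CTS := fun j => if j = 0 then embT (φ 0) + w else embT (φ j) with hg
  have hF : deformSubst φ w f = substArc g f := rfl
  have hmsv : PowerSeries.map (PowerSeries.constantCoeff) sVar = 0 := by
    rw [sVar, PowerSeries.map_C]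
    simp
  have hms : PowerSeries.map (PowerSeries.constantCoeff) w = 0 := by
    rw [hw, map_mul, hmsv, zero_mul]
  have hres : PowerSeries.map (PowerSeries.constantCoeff) (substArc g f) = 0 := by
    rw [resT_substArc]
    have hgr : (fun j => PowerSeries.map (PowerSeries.constantCoeff) (g j)) = φ := by
      funext j
      simp only [hg]
      split_ifs with hj
      · subst hj
        rw [map_add, hms, resT_embT, add_zero]
      · exact resT_embT _
    rw [hgr, hfφ]
  have hEφ : substArc (fun j => embT (φ j)) f = 0 := by
    rw [embT_substArc, hfφ, embT]
    exact map_zero _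
  have hlow : ∀ i, i ≤ d → PowerSeries.coeff i (substArc g f) = 0 := by
    intro i hi
    have key : ∀ e : Fin (n+1) →₀ ℕ,
        PowerSeries.coeff i (∏ j, g j ^ e j)
        = PowerSeries.coeff i (∏ j, (embT (φ j)) ^ e j) := by
      intro e
      have hdvd : (PowerSeries.X : CTS)^(d+1)
          ∣ (∏ j, g j ^ e j - ∏ j, (embT (φ j)) ^ e j) := by
        rw [← Ideal.mem_span_singleton, ← Ideal.Quotient.eq_zero_iff_mem, map_sub, sub_eq_zero,
          map_prod, map_prod]
        have hw0 : Ideal.Quotient.mk (Ideal.span {(PowerSeries.X : CTS)^(d+1)}) w = 0 :=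
          Ideal.Quotient.eq_zero_iff_mem.mpr
            (Ideal.mem_span_singleton.mpr ⟨sVar, by rw [hw, mul_comm]⟩)
        refine Finset.prod_congr rfl fun j _ => ?_
        rw [map_pow, map_pow]
        congr 1
        simp only [hg]
        split_ifs with hj
        · subst hj
          rw [map_add, hw0, add_zero]
        · rfl
      have h0 := PowerSeries.X_pow_dvd_iff.mp hdvd i (by omega)
      rw [map_sub, sub_eq_zero] at h0
      exact h0
    have heq : PowerSeries.coeff i (substArc g f)
        = PowerSeries.coeff i (substArc (fun j => embT (φ j)) f) := by
      simp only [substArc, PowerSeries.coeff_mk]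
      exact Finset.sum_congr rfl fun e _ => by rw [key e]
    rw [heq, hEφ, map_zero]
  have hXdvd : (PowerSeries.X : CTS) ^ (d + 1) ∣ substArc g f :=
    PowerSeries.X_pow_dvd_iff.mpr fun i hi => hlow i (by omega)
  have hsd : ∀ i, (PowerSeries.X : PowerSeries ℂ)
      ∣ PowerSeries.coeff i (substArc g f) := by
    intro i
    rw [PowerSeries.X_dvd_iff]
    have h1 := congrArg (PowerSeries.coeff i) hres
    rw [PowerSeries.coeff_map] at h1
    simpa using h1
  choose Gc hGc using hsd
  set G : CTS := PowerSeries.mk Gc with hGdef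
  have hFG : substArc g f = sVar * G := by
    ext i
    rw [sVar, PowerSeries.coeff_C_mul, hGdef, PowerSeries.coeff_mk, ← hGc i]
  have hGlow : ∀ i, i ≤ d → PowerSeries.coeff i G = 0 := by
    intro i hi
    have h1 := hGc i
    rw [hlow i hi] at h1
    have h2 := (mul_eq_zero.mp h1.symm).resolve_left PowerSeries.X_ne_zero
    rw [hGdef, PowerSeries.coeff_mk]
    exact h2
  obtain ⟨H, hH⟩ : (PowerSeries.X : CTS)^(d+1) ∣ G :=
    PowerSeries.X_pow_dvd_iff.mpr fun i hi => hGlow i (by omega)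
  obtain ⟨hcd, hclow⟩ := PowerSeries.order_eq_nat.mp hd
  obtain ⟨u, hu⟩ : (PowerSeries.X : PowerSeries ℂ)^d ∣ ψ₁ :=
    PowerSeries.X_pow_dvd_iff.mpr hclow
  have hu0 : PowerSeries.constantCoeff u ≠ 0 := by
    intro h0
    apply hcd
    rw [hu]
    have h1 := PowerSeries.coeff_X_pow_mul u d 0
    rw [zero_add] at h1
    rw [h1, PowerSeries.coeff_zero_eq_constantCoeff_apply, h0]
  have hpsiv : ψ₁ * u⁻¹ = PowerSeries.X ^ d := by
    rw [hu, mul_assoc, PowerSeries.mul_inv_cancel u hu0, mul_one]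
  have hemul : embT ψ₁ * embT u⁻¹ = (PowerSeries.X : CTS)^d := by
    rw [embT, embT, ← map_mul, hpsiv, map_pow, PowerSeries.map_X]
  -- nonvanishing
  have hmem : Finsupp.single (0 : Fin (n+1)) m ∈
      Finset.Iic (Finsupp.equivFunOnFinite.symm fun _ : Fin (n + 1) => m*(d+1)) := by
    rw [Finset.mem_Iic]
    intro a
    simp only [Finsupp.coe_equivFunOnFinite_symm, Finsupp.single_apply]
    split_ifs
    · exact Nat.le_mul_of_pos_right m (by omega)
    · exact Nat.zero_le _
  have hne : substArc g f ≠ 0 := by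
    intro h0
    apply hz
    have hco : PowerSeries.coeff m (PowerSeries.coeff (m*(d+1))
        (substArc g f)) = MvPowerSeries.coeff (Finsupp.single 0 m) f := by
      rw [substArc, PowerSeries.coeff_mk, map_sum]
      have hstep : ∀ e ∈ Finset.Iic (Finsupp.equivFunOnFinite.symm
            fun _ : Fin (n + 1) => m*(d+1)),
          PowerSeries.coeff m (MvPowerSeries.coeff e f
            • PowerSeries.coeff (m*(d+1)) (∏ j, g j ^ e j))
          = if e = Finsupp.single 0 m then MvPowerSeries.coeff e f else 0 := by
        intro e _
        rw [map_smul, smul_eq_mul]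
        have ht : PowerSeries.coeff m (PowerSeries.coeff (m*(d+1))
            (∏ j, g j ^ e j)) = if e = Finsupp.single 0 m then 1 else 0 := by
          simp only [hg, hw]
          exact Tcalc φ hφ d m (by omega) e
        rw [ht]
        split_ifs <;> simp
      rw [Finset.sum_congr rfl hstep, Finset.sum_ite_eq' _ (Finsupp.single 0 m), if_pos hmem]
    rw [h0] at hco
    simp at hco
    exact hco.symm
  rw [hF]
  refine ⟨hne, hXdvd, hres, embT u⁻¹ * (sVar * PowerSeries.X * H), ?_, ?_, ?_⟩
  · exact ⟨embT u⁻¹ * sVar * H, by ring⟩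
  · rw [map_mul, map_mul, map_mul, hmsv]
    ring
  · calc embT ψ₁ * (embT u⁻¹ * (sVar * PowerSeries.X * H))
        = (embT ψ₁ * embT u⁻¹) * (sVar * PowerSeries.X * H) := by ring
      _ = (PowerSeries.X : CTS)^d * (sVar * PowerSeries.X * H) := by rw [hemul]
      _ = sVar * ((PowerSeries.X : CTS)^(d+1) * H) := by ring
      _ = sVar * G := by rw [← hH]
      _ = substArc g f := hFG.symm
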